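/- Let X be a set and let H' be a finite-dimensional linear subspace, of dimension n, of the real vector space of all functions from X to ℝ. Then the pseudo-dimension of H' equals n: there exists a list of n points of X that is P-shattered by H', and no list of n+1 points of X is P-shattered by H'. -/

import Mathlib

/-- A finite list of points `x₁,…,x_k` is P-shattered by a class `H` of real-valued
functions if there are thresholds `s₁,…,s_k` such that every sign pattern is realized,
where `sign t = +1` iff `t ≥ 0`. -/
def PShatters {X : Type*} (H : Set (X → ℝ)) {k : ℕ} (x : Fin k → X) : Prop :=
  ∃ s : Fin k → ℝ, ∀ σ : Fin k → Bool, ∃ h ∈ H, ∀ i, (σ i = true ↔ s i ≤ h (x i))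

section aux

variable {X : Type*} (H' : Submodule ℝ (X → ℝ))

/-- Evaluation at a point, as a linear functional on `H'`. -/
noncomputable def evalAt (x : X) : Module.Dual ℝ H' :=
  (LinearMap.proj x).comp H'.subtype

@[simp] lemma evalAt_apply (x : X) (h : H') : evalAt H' x h = (h : X → ℝ) x := rfl

variable [FiniteDimensional ℝ H']

lemma span_range_evalAt : Submodule.span ℝ (Set.range (evalAt H')) = ⊤ := by
  apply Submodule.span_eq_top_of_ne_zero
  intro z hz
  have hz' : (z : X → ℝ) ≠ 0 := fun h => hz (Subtype.ext h)
  obtain ⟨x, hx⟩ : ∃ x, (z : X → ℝ) x ≠ 0 := by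
    by_contra hc
    push_neg at hc
    exact hz' (funext hc)
  exact ⟨evalAt H' x, ⟨x, rfl⟩, hx⟩

end aux

theorem pseudoDim_of_vectorSpace {X : Type*} (H' : Submodule ℝ (X → ℝ)) (n : ℕ)
    [FiniteDimensional ℝ H'] (hn : Module.finrank ℝ H' = n) :
    (∃ x : Fin n → X, PShatters (H' : Set (X → ℝ)) x) ∧
    (∀ x : Fin (n + 1) → X, ¬ PShatters (H' : Set (X → ℝ)) x) := by
  constructor
  · -- Lower bound: some `n` points are P-shattered.
    -- Extract a basis of the dual from the evaluation functionals.
    obtain ⟨b, hbsub, hbspan, hbli⟩ :=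
      exists_linearIndependent ℝ (Set.range (evalAt H'))
    rw [span_range_evalAt H'] at hbspan
    have hbfin : b.Finite := hbli.setFinite
    haveI : Fintype b := hbfin.fintype
    have hbasis : Module.Basis b ℝ (Module.Dual ℝ H') :=
      Module.Basis.mk hbli (by rw [Subtype.range_coe, hbspan])
    have hcard : Fintype.card b = n := by
      rw [← Module.finrank_eq_card_basis hbasis, Subspace.dual_finrank_eq, hn]
    obtain ⟨e⟩ : Nonempty (Fin n ≃ b) :=
      ⟨(Fintype.equivFinOfCardEq hcard).symm⟩
    -- choose points realizing the basis functionals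
    have hx : ∀ i : Fin n, ∃ x : X, evalAt H' x = (e i : Module.Dual ℝ H') :=
      fun i => hbsub (e i).2
    choose x hxe using hx
    -- the joint evaluation map is injective, hence surjective
    let T : H' →ₗ[ℝ] (Fin n → ℝ) := LinearMap.pi fun i => evalAt H' (x i)
    have hTinj : Function.Injective T := by
      rw [← LinearMap.ker_eq_bot, eq_bot_iff]
      intro h hh
      have hh' : ∀ i : Fin n, evalAt H' (x i) h = 0 := fun i =>
        congrFun (LinearMap.mem_ker.mp hh) i
      have hker : b ⊆ ↑(LinearMap.ker (Module.Dual.eval ℝ H' h)) := by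
        intro f hf
        obtain ⟨i, rfl⟩ : ∃ i : Fin n, (e i : Module.Dual ℝ H') = f :=
          ⟨e.symm ⟨f, hf⟩, by simp⟩
        simpa [Module.Dual.eval, ← hxe i] using hh' i
      have htop : (⊤ : Submodule ℝ (Module.Dual ℝ H')) ≤
          LinearMap.ker (Module.Dual.eval ℝ H' h) := by
        rw [← hbspan]
        exact Submodule.span_le.mpr hker
      have hzero : ∀ y : X, (h : X → ℝ) y = 0 := by
        intro y
        have := htop (Submodule.mem_top (x := evalAt H' y))
        simpa [Module.Dual.eval] using this
      have : (h : X → ℝ) = 0 := funext hzero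
      simp only [Submodule.mem_bot]
      exact Subtype.ext this
    have hTsurj : Function.Surjective T := by
      have hfr : Module.finrank ℝ H' = Module.finrank ℝ (Fin n → ℝ) := by
        rw [hn, Module.finrank_fin_fun]
      exact (LinearMap.injective_iff_surjective_of_finrank_eq_finrank hfr).mp hTinj
    refine ⟨x, 0, fun σ => ?_⟩
    obtain ⟨h, hh⟩ := hTsurj (fun i => if σ i then 1 else -1)
    refine ⟨(h : X → ℝ), h.2, fun i => ?_⟩
    have hhi : (h : X → ℝ) (x i) = if σ i then 1 else -1 := congrFun hh i
    rcases hσ : σ i with _ | _ <;> simp_all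
  · -- Upper bound: no `n+1` points are P-shattered.
    intro x ⟨s, hs⟩
    -- the image of the evaluation map has dimension at most `n`
    set E : H' →ₗ[ℝ] (Fin (n + 1) → ℝ) := LinearMap.pi fun i => evalAt H' (x i) with hE
    have hrank : Module.finrank ℝ (LinearMap.range E) ≤ n := by
      calc Module.finrank ℝ (LinearMap.range E) ≤ Module.finrank ℝ H' :=
            LinearMap.finrank_range_le E
        _ = n := hn
    have hlt : LinearMap.range E < ⊤ := by
      rcases lt_or_eq_of_le (le_top (a := LinearMap.range E)) with h | h
      · exact h
      · exfalso
        have := hrank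
        rw [h, finrank_top, Module.finrank_fin_fun] at this
        omega
    obtain ⟨f, hf0, hfker⟩ :=
      Submodule.exists_dual_map_eq_bot_of_lt_top hlt inferInstance
    set lam : Fin (n + 1) → ℝ := fun i => f (Pi.single i 1) with hlam
    -- f is given by the coefficients lam
    have hfv : ∀ v : Fin (n + 1) → ℝ, f v = ∑ i, lam i * v i := by
      intro v
      conv_lhs => rw [← Finset.univ_sum_single v]
      rw [map_sum]
      refine Finset.sum_congr rfl fun i _ => ?_
      have h1 : Pi.single i (v i) = v i • (Pi.single i 1 : Fin (n + 1) → ℝ) := by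
        ext j
        by_cases hij : i = j <;> simp [Pi.single_apply, hij]
      rw [h1, map_smul, smul_eq_mul, mul_comm]
    -- f vanishes on the range of E
    have hfE : ∀ h : H', ∑ i, lam i * (h : X → ℝ) (x i) = 0 := by
      intro h
      have : E h ∈ LinearMap.range E := LinearMap.mem_range_self E h
      have hmap : f (E h) = 0 := by
        have : f (E h) ∈ (LinearMap.range E).map f :=
          Submodule.mem_map_of_mem this
        rwa [hfker, Submodule.mem_bot] at this
      rw [hfv] at hmap
      simpa [E] using hmap
    -- some coefficient is nonzero
    obtain ⟨j, hj⟩ : ∃ j, lam j ≠ 0 := by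
      by_contra hc
      push_neg at hc
      apply hf0
      apply LinearMap.ext
      intro v
      rw [hfv]
      simp [hc]
    -- realize the two sign patterns given by lam
    obtain ⟨h₁, hh₁, hσ₁⟩ := hs fun i => decide (0 < lam i)
    obtain ⟨h₂, hh₂, hσ₂⟩ := hs fun i => decide (lam i < 0)
    -- termwise inequalities
    have hA : ∀ i, lam i * s i ≤ lam i * h₁ (x i) := by
      intro i
      rcases lt_or_ge 0 (lam i) with hpos | hnpos
      · have : s i ≤ h₁ (x i) := (hσ₁ i).mp (by simp [hpos])
        exact mul_le_mul_of_nonneg_left this hpos.le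
      · have : ¬ (s i ≤ h₁ (x i)) := by
          intro hle
          have : decide (0 < lam i) = true := (hσ₁ i).mpr hle
          simp at this
          exact absurd this (not_lt.mpr hnpos)
        have hlt : h₁ (x i) < s i := not_le.mp this
        exact mul_le_mul_of_nonpos_left hlt.le hnpos
    have hB : ∀ i, lam i * h₂ (x i) ≤ lam i * s i := by
      intro i
      rcases lt_or_ge (lam i) 0 with hneg | hnneg
      · have : s i ≤ h₂ (x i) := (hσ₂ i).mp (by simp [hneg])
        exact mul_le_mul_of_nonpos_left this hneg.le
      · have : ¬ (s i ≤ h₂ (x i)) := by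
          intro hle
          have : decide (lam i < 0) = true := (hσ₂ i).mpr hle
          simp at this
          exact absurd this (not_lt.mpr hnneg)
        have hlt : h₂ (x i) < s i := not_le.mp this
        exact mul_le_mul_of_nonneg_left hlt.le hnneg
    have hsum1 : ∑ i, lam i * s i ≤ 0 := by
      calc ∑ i, lam i * s i ≤ ∑ i, lam i * h₁ (x i) :=
            Finset.sum_le_sum fun i _ => hA i
        _ = 0 := hfE ⟨h₁, hh₁⟩
    have hsum2 : (0 : ℝ) ≤ ∑ i, lam i * s i := by
      calc (0 : ℝ) = ∑ i, lam i * h₂ (x i) := (show ∑ i, lam i * h₂ (x i) = 0 from hfE ⟨h₂, hh₂⟩).symm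
        _ ≤ ∑ i, lam i * s i := Finset.sum_le_sum fun i _ => hB i
    -- strictness at index j gives a contradiction
    rcases lt_or_gt_of_ne hj with hneg | hpos
    · -- lam j < 0 : hA is strict at j
      have hAj : lam j * s j < lam j * h₁ (x j) := by
        have : ¬ (s j ≤ h₁ (x j)) := by
          intro hle
          have : decide (0 < lam j) = true := (hσ₁ j).mpr hle
          simp at this
          exact absurd this (not_lt.mpr hneg.le)
        have hlt : h₁ (x j) < s j := not_le.mp this
        exact mul_lt_mul_of_neg_left hlt hneg
      have : ∑ i, lam i * s i < ∑ i, lam i * h₁ (x i) := by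
        apply Finset.sum_lt_sum (fun i _ => hA i) ⟨j, Finset.mem_univ j, hAj⟩
      have hz : ∑ i, lam i * h₁ (x i) = 0 := hfE ⟨h₁, hh₁⟩
      rw [hz] at this
      linarith
    · -- lam j > 0 : hB is strict at j
      have hBj : lam j * h₂ (x j) < lam j * s j := by
        have : ¬ (s j ≤ h₂ (x j)) := by
          intro hle
          have : decide (lam j < 0) = true := (hσ₂ j).mpr hle
          simp at this
          exact absurd this (not_lt.mpr hpos.le)
        have hlt : h₂ (x j) < s j := not_le.mp this
        exact mul_lt_mul_of_pos_left hlt hpos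
      have : ∑ i, lam i * h₂ (x i) < ∑ i, lam i * s i := by
        apply Finset.sum_lt_sum (fun i _ => hB i) ⟨j, Finset.mem_univ j, hBj⟩
      have hz : ∑ i, lam i * h₂ (x i) = 0 := hfE ⟨h₂, hh₂⟩
      rw [hz] at this
      linarith
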